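/- Let A be an n-by-n reciprocal matrix with all entries equal to 1 except in the first row and column. If w is efficient for A, then there exist distinct indices i, j ∈ {2,...,n} with a_{1i}·a_{j1} < 1 such that a_{i1}·w_1 ≥ w_i, w_i ≥ w_k ≥ w_j for all k ∉ {1,i,j}, and w_j ≥ a_{j1}·w_1. Together with the converse, the set of efficient vectors for A equals the union over such pairs (i,j) of these convex sets ε_{ij}(A). -/

import Mathlib

def Reciprocal {n : ℕ} (A : Matrix (Fin n) (Fin n) ℝ) : Prop :=
  (∀ i j, 0 < A i j) ∧ ∀ i j, A j i = 1 / A i j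

/-- Edge `p → q` in the digraph `G(A, w)`. -/
def Edge {n : ℕ} (A : Matrix (Fin n) (Fin n) ℝ) (w : Fin n → ℝ) (p q : Fin n) : Prop :=
  p ≠ q ∧ A p q * w q ≤ w p

/-- `w` is efficient for `A` iff `w` is positive and `G(A,w)` is strongly connected. -/
def Efficient {n : ℕ} (A : Matrix (Fin n) (Fin n) ℝ) (w : Fin n → ℝ) : Prop :=
  (∀ i, 0 < w i) ∧ ∀ i j : Fin n, Relation.ReflTransGen (Edge A w) i j

/-- `A` is consistent if `A = v v^{(-T)}` for some positive vector `v`. -/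
def Consistent {n : ℕ} (A : Matrix (Fin n) (Fin n) ℝ) : Prop :=
  ∃ v : Fin n → ℝ, (∀ i, 0 < v i) ∧ ∀ i j, A i j = v i / v j

/-- For an inconsistent column perturbed consistent matrix in standard form, the
set of efficient vectors is the union over pairs `(i,j)` with `a_{1i} a_{j1} < 1`
of the convex chain sets `ε_{ij}(A)`. -/
theorem stmt14 {n : ℕ} [NeZero n] (A : Matrix (Fin n) (Fin n) ℝ) (hA : Reciprocal A)
    (hones : ∀ p q : Fin n, p ≠ 0 → q ≠ 0 → A p q = 1)
    (hinc : ¬ Consistent A)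
    (w : Fin n → ℝ) (hw : ∀ k, 0 < w k) :
    Efficient A w ↔
      ∃ i j : Fin n, i ≠ 0 ∧ j ≠ 0 ∧ i ≠ j ∧ A 0 i * A j 0 < 1 ∧
        w i ≤ A i 0 * w 0 ∧
        (∀ k : Fin n, k ≠ 0 → k ≠ i → k ≠ j → w k ≤ w i ∧ w j ≤ w k) ∧
        w j ≤ w i ∧
        A j 0 * w 0 ≤ w j := by
  obtain ⟨hApos, hArec⟩ := hA
  have hw0 : (0:ℝ) < w 0 := hw 0
  have hdiag : ∀ i : Fin n, A i i = 1 := by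
    intro i
    have h := hArec i i
    have hp := hApos i i
    field_simp at h
    nlinarith
  have hkl : ∃ k l : Fin n, k ≠ 0 ∧ l ≠ 0 ∧ A k 0 ≠ A l 0 := by
    by_contra hcon
    push_neg at hcon
    apply hinc
    refine ⟨fun k => A k 0, fun i => hApos i 0, fun i j => ?_⟩
    show A i j = A i 0 / A j 0
    by_cases hj : j = 0
    · subst hj
      simp [hdiag 0]
    · by_cases hi : i = 0
      · subst hi
        rw [hArec j 0, hdiag 0]
      · by_cases hij : i = j
        · subst hij
          rw [hdiag i, div_self (ne_of_gt (hApos i 0))]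
        · rw [hones i j hi hj, hcon i j hi hj, div_self (ne_of_gt (hApos j 0))]
  constructor
  · rintro ⟨-, hconn⟩
    have key1 : ∀ q : Fin n, Relation.ReflTransGen (Edge A w) 0 q →
        q = 0 ∨ ∃ i, i ≠ 0 ∧ w i ≤ A i 0 * w 0 ∧ w q ≤ w i := by
      intro q h
      induction h with
      | refl => exact Or.inl rfl
      | @tail p q hp hpq ih =>
        by_cases hq0 : q = 0
        · exact Or.inl hq0
        · right
          obtain ⟨hne, hle⟩ := hpq
          by_cases hp0 : p = 0
          · subst hp0
            refine ⟨q, hq0, ?_, le_refl _⟩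
            rw [hArec q 0, one_div_mul_eq_div, div_le_iff₀ (hApos q 0)] at hle
            linarith [mul_comm (w 0) (A q 0)]
          · have h1 : A p q = 1 := hones p q hp0 hq0
            rw [h1, one_mul] at hle
            rcases ih with h0 | ⟨i, hi0, hib, hpi⟩
            · exact absurd h0 hp0
            · exact ⟨i, hi0, hib, hle.trans hpi⟩
    have key2 : ∀ p : Fin n, Relation.ReflTransGen (Edge A w) p 0 →
        p = 0 ∨ ∃ j, j ≠ 0 ∧ A j 0 * w 0 ≤ w j ∧ w j ≤ w p := by
      intro p h
      induction h using Relation.ReflTransGen.head_induction_on with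
      | refl => exact Or.inl rfl
      | @head p c hpc hc ih =>
        by_cases hp0 : p = 0
        · exact Or.inl hp0
        · right
          obtain ⟨hne, hle⟩ := hpc
          by_cases hc0 : c = 0
          · subst hc0
            exact ⟨p, hp0, hle, le_refl _⟩
          · have h1 : A p c = 1 := hones p c hp0 hc0
            rw [h1, one_mul] at hle
            rcases ih with h0 | ⟨j, hj0, hjb, hjc⟩
            · exact absurd h0 hc0
            · exact ⟨j, hj0, hjb, hjc.trans hle⟩
    obtain ⟨k, l, hk0, hl0, hklne⟩ := hkl
    set s : Finset (Fin n) := Finset.univ.filter (fun t => t ≠ 0) with hs_def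
    have hmem : ∀ x : Fin n, x ∈ s ↔ x ≠ 0 := by intro x; simp [hs_def]
    have hsne : s.Nonempty := ⟨k, (hmem k).mpr hk0⟩
    obtain ⟨imax, himem, himax⟩ := s.exists_max_image w hsne
    obtain ⟨jmin, hjmem, hjmin⟩ := s.exists_min_image w hsne
    obtain (h0 | ⟨i', hi'0, hi'b, hi'max⟩) := key1 imax (hconn 0 imax)
    · exact absurd h0 ((hmem imax).mp himem)
    obtain (h0 | ⟨j', hj'0, hj'b, hj'min⟩) := key2 jmin (hconn jmin 0)
    · exact absurd h0 ((hmem jmin).mp hjmem)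
    have hmaxall : ∀ t : Fin n, t ≠ 0 → w t ≤ w i' :=
      fun t ht => (himax t ((hmem t).mpr ht)).trans hi'max
    have hminall : ∀ t : Fin n, t ≠ 0 → w j' ≤ w t :=
      fun t ht => hj'min.trans (hjmin t ((hmem t).mpr ht))
    by_cases hcase : w j' < w i'
    · have hbi : A j' 0 * w 0 < A i' 0 * w 0 :=
        lt_of_le_of_lt hj'b (lt_of_lt_of_le hcase hi'b)
      have hb : A j' 0 < A i' 0 := lt_of_mul_lt_mul_right hbi hw0.le
      refine ⟨i', j', hi'0, hj'0, ?_, ?_, hi'b, ?_, hcase.le, hj'b⟩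
      · intro h; rw [h] at hcase; exact lt_irrefl _ hcase
      · rw [hArec i' 0, one_div_mul_eq_div, div_lt_one (hApos i' 0)]; exact hb
      · intro t ht0 hti htj; exact ⟨hmaxall t ht0, hminall t ht0⟩
    · push_neg at hcase
      obtain ⟨i0, hi0mem, hi0max⟩ := s.exists_max_image (fun t => A t 0) hsne
      obtain ⟨j0, hj0mem, hj0min⟩ := s.exists_min_image (fun t => A t 0) hsne
      have hi00 := (hmem i0).mp hi0mem
      have hj00 := (hmem j0).mp hj0mem
      have hble : A j0 0 < A i0 0 := by
        have h1 : A j0 0 ≤ A k 0 := hj0min k ((hmem k).mpr hk0)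
        have h2 : A k 0 ≤ A i0 0 := hi0max k ((hmem k).mpr hk0)
        have h3 : A j0 0 ≤ A l 0 := hj0min l ((hmem l).mpr hl0)
        have h4 : A l 0 ≤ A i0 0 := hi0max l ((hmem l).mpr hl0)
        rcases lt_or_ge (A j0 0) (A i0 0) with h | h
        · exact h
        · exact absurd (by linarith : A k 0 = A l 0) hklne
      have hij0 : i0 ≠ j0 := by intro h; rw [h] at hble; exact lt_irrefl _ hble
      refine ⟨i0, j0, hi00, hj00, hij0, ?_, ?_, ?_, ?_, ?_⟩
      · rw [hArec i0 0, one_div_mul_eq_div, div_lt_one (hApos i0 0)]; exact hble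
      · have h1 := hmaxall i0 hi00
        have h2 : A i' 0 ≤ A i0 0 := by
          have := hi0max i' ((hmem i').mpr hi'0); simpa using this
        nlinarith
      · intro t ht0 hti htj
        have h1 := hmaxall t ht0
        have h2 := hminall i0 hi00
        have h3 := hminall t ht0
        have h4 := hmaxall j0 hj00
        exact ⟨by linarith, by linarith⟩
      · have h1 := hmaxall j0 hj00
        have h2 := hminall i0 hi00
        linarith
      · have h1 := hminall j0 hj00
        have h2 : A j0 0 ≤ A j' 0 := by
          have := hj0min j' ((hmem j').mpr hj'0); simpa using this
        nlinarith
  · rintro ⟨i, j, hi0, hj0, hij, -, hwi, hmid, hji, hwj⟩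
    refine ⟨hw, ?_⟩
    have e1 : Edge A w 0 i := by
      refine ⟨Ne.symm hi0, ?_⟩
      rw [hArec i 0, one_div_mul_eq_div, div_le_iff₀ (hApos i 0)]
      linarith [mul_comm (w 0) (A i 0)]
    have e2 : ∀ t : Fin n, t ≠ 0 → t ≠ i → Edge A w i t := by
      intro t ht0 hti
      refine ⟨Ne.symm hti, ?_⟩
      rw [hones i t hi0 ht0, one_mul]
      by_cases htj : t = j
      · subst htj; exact hji
      · exact (hmid t ht0 hti htj).1
    have e3 : ∀ t : Fin n, t ≠ 0 → t ≠ j → Edge A w t j := by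
      intro t ht0 htj
      refine ⟨htj, ?_⟩
      rw [hones t j ht0 hj0, one_mul]
      by_cases hti : t = i
      · subst hti; exact hji
      · exact (hmid t ht0 hti htj).2
    have e4 : Edge A w j 0 := ⟨hj0, hwj⟩
    have hto0 : ∀ p : Fin n, Relation.ReflTransGen (Edge A w) p 0 := by
      intro p
      by_cases hp0 : p = 0
      · subst hp0; exact Relation.ReflTransGen.refl
      by_cases hpj : p = j
      · subst hpj; exact Relation.ReflTransGen.single e4
      · exact Relation.ReflTransGen.head (e3 p hp0 hpj) (Relation.ReflTransGen.single e4)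
    have hfrom0 : ∀ q : Fin n, Relation.ReflTransGen (Edge A w) 0 q := by
      intro q
      by_cases hq0 : q = 0
      · subst hq0; exact Relation.ReflTransGen.refl
      by_cases hqi : q = i
      · subst hqi; exact Relation.ReflTransGen.single e1
      · exact Relation.ReflTransGen.head e1 (Relation.ReflTransGen.single (e2 q hq0 hqi))
    intro p q
    exact (hto0 p).trans (hfrom0 q)
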